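/- arXiv:1602.01440 — 4 statements merged into one kernel-verified Lean document; each statement's English description precedes it below -/
import Mathlib

section
/- Let E be a finite-dimensional real inner product space and let w be a linear isometric automorphism of E. Then the determinant of w equals (-1)^(dim E - dim E^w), where E^w = {x ∈ E : w x = x} is the subspace of fixed vectors of w. -/
open Module

/-- If `u` is an inner-product-preserving endomorphism of a finite-dimensional real inner
product space with no nonzero fixed vector, then `det u = (-1) ^ dim V`. -/
private lemma aux_det_no_fixed {V : Type*} [NormedAddCommGroup V] [InnerProductSpace ℝ V]
    [FiniteDimensional ℝ V] (u : V →ₗ[ℝ] V)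
    (hu : ∀ x y : V, (inner ℝ (u x) (u y) : ℝ) = inner ℝ x y)
    (hinj : Function.Injective (u - (LinearMap.id : V →ₗ[ℝ] V))) :
    LinearMap.det u = (-1 : ℝ) ^ (finrank ℝ V) := by
  classical
  set n := finrank ℝ V with hn
  let b := stdOrthonormalBasis ℝ V
  set M := LinearMap.toMatrix b.toBasis b.toBasis u with hMdef
  have hMapp : ∀ k i, M k i = (inner ℝ (b k) (u (b i)) : ℝ) := by
    intro k i
    rw [hMdef, LinearMap.toMatrix_apply, OrthonormalBasis.coe_toBasis_repr_apply,
      OrthonormalBasis.repr_apply_apply, OrthonormalBasis.coe_toBasis]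
  have hMM : M.transpose * M = 1 := by
    ext i j
    rw [Matrix.mul_apply]
    simp only [Matrix.transpose_apply, hMapp]
    calc ∑ k, (inner ℝ (b k) (u (b i)) * inner ℝ (b k) (u (b j)) : ℝ)
        = ∑ k, (inner ℝ (u (b i)) (b k) * inner ℝ (b k) (u (b j)) : ℝ) := by
          simp [real_inner_comm]
      _ = inner ℝ (u (b i)) (u (b j)) := b.sum_inner_mul_inner _ _
      _ = inner ℝ (b i) (b j) := hu _ _
      _ = (1 : Matrix (Fin n) (Fin n) ℝ) i j := by
          rw [orthonormal_iff_ite.1 b.orthonormal i j, Matrix.one_apply]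
  have hne : (M - 1).det ≠ 0 := by
    have h2 : (M - 1) = LinearMap.toMatrix b.toBasis b.toBasis (u - LinearMap.id) := by
      rw [map_sub, LinearMap.toMatrix_id]
    rw [h2, LinearMap.det_toMatrix]
    intro h0
    have := LinearMap.bot_lt_ker_of_det_eq_zero h0
    rw [LinearMap.ker_eq_bot.2 hinj] at this
    exact lt_irrefl _ this
  have key : (M - 1).det = M.det * (-1 : ℝ) ^ n * (M - 1).det := by
    conv_lhs => rw [← Matrix.det_transpose]
    have h1 : (M - 1).transpose = M.transpose * (1 - M) := by
      rw [Matrix.mul_sub, mul_one, hMM, Matrix.transpose_sub, Matrix.transpose_one]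
    rw [h1, Matrix.det_mul, Matrix.det_transpose]
    have h3 : (1 - M : Matrix (Fin n) (Fin n) ℝ) = -(M - 1) := by rw [neg_sub]
    rw [h3, Matrix.det_neg, Fintype.card_fin]
    ring
  have hMdet : M.det * (-1 : ℝ) ^ n = 1 :=
    mul_right_cancel₀ hne (by rw [one_mul]; exact key.symm)
  have : M.det = (-1 : ℝ) ^ n := by
    have h4 : ((-1 : ℝ) ^ n) * ((-1 : ℝ) ^ n) = 1 := by
      rw [← pow_add, Even.neg_one_pow ⟨n, rfl⟩]
    calc M.det = M.det * ((-1 : ℝ) ^ n * (-1 : ℝ) ^ n) := by rw [h4, mul_one]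
      _ = (M.det * (-1 : ℝ) ^ n) * (-1 : ℝ) ^ n := by ring
      _ = (-1 : ℝ) ^ n := by rw [hMdet, one_mul]
  rw [← LinearMap.det_toMatrix b.toBasis u, ← hMdef, this]

/-- Let `E` be a finite-dimensional real inner ℝ product space and `w` a linear isometric
automorphism of `E`. Then `det w = (-1) ^ (dim E - dim E^w)`, where `E^w` is the subspace
of fixed vectors of `w`. -/
theorem det_linearIsometryEquiv_eq_neg_one_pow_sub_finrank_fixed
    {E : Type*} [NormedAddCommGroup E] [InnerProductSpace ℝ E] [FiniteDimensional ℝ E]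
    (w : E ≃ₗᵢ[ℝ] E) :
    LinearMap.det (w.toLinearEquiv : E →ₗ[ℝ] E) =
      (-1 : ℝ) ^
        (Module.finrank ℝ E -
          Module.finrank ℝ
            (LinearMap.ker ((w.toLinearEquiv : E →ₗ[ℝ] E) - LinearMap.id))) := by
  classical
  set w' : E →ₗ[ℝ] E := (w.toLinearEquiv : E →ₗ[ℝ] E) with hw'
  set F : Submodule ℝ E := LinearMap.ker (w' - LinearMap.id) with hF
  have hw'app : ∀ x : E, w' x = w x := fun x => rfl
  have hFmem : ∀ x : E, x ∈ F ↔ w' x = x := by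
    intro x
    rw [hF, LinearMap.mem_ker, LinearMap.sub_apply, LinearMap.id_apply, sub_eq_zero]
  have hwF : ∀ x ∈ F, w' x ∈ F := by
    intro x hx
    rw [(hFmem x).1 hx]; exact hx
  have hwFo : ∀ x ∈ Fᗮ, w' x ∈ Fᗮ := by
    intro x hx
    rw [Submodule.mem_orthogonal] at hx ⊢
    intro y hy
    have h1 : (inner ℝ (w' y) (w' x) : ℝ) = inner ℝ y x := w.inner_map_map y x
    rw [(hFmem y).1 hy] at h1
    rw [h1]
    exact hx y hy
  set f : F →ₗ[ℝ] F := w'.restrict hwF with hfdef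
  set g : Fᗮ →ₗ[ℝ] Fᗮ := w'.restrict hwFo with hgdef
  have hcompl : IsCompl F Fᗮ := Submodule.isCompl_orthogonal_of_hasOrthogonalProjection
  set e := Submodule.prodEquivOfIsCompl F Fᗮ hcompl with hedef
  -- conjugation identity
  have hconj : w' = (e : F × Fᗮ →ₗ[ℝ] E) ∘ₗ (f.prodMap g) ∘ₗ (e.symm : E →ₗ[ℝ] F × Fᗮ) := by
    have hcomm : w' ∘ₗ (e : F × Fᗮ →ₗ[ℝ] E) = (e : F × Fᗮ →ₗ[ℝ] E) ∘ₗ (f.prodMap g) := by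
      apply LinearMap.ext
      rintro ⟨x, y⟩
      simp only [LinearMap.comp_apply, LinearEquiv.coe_coe, hedef,
        Submodule.coe_prodEquivOfIsCompl', LinearMap.prodMap_apply, map_add, hfdef, hgdef,
        LinearMap.restrict_coe_apply]
    apply LinearMap.ext
    intro x
    have := congrArg (fun (h : F × Fᗮ →ₗ[ℝ] E) => h (e.symm x)) hcomm
    simpa using this
  rw [hconj, LinearMap.det_conj]
  -- determinant of the product map
  have hdetprod : LinearMap.det (f.prodMap g) = LinearMap.det f * LinearMap.det g := by
    let bF := finBasis ℝ F
    let bG := finBasis ℝ (Fᗮ : Submodule ℝ E)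
    rw [← LinearMap.det_toMatrix (bF.prod bG), LinearMap.toMatrix_prodMap,
      Matrix.det_fromBlocks_zero₁₂, LinearMap.det_toMatrix, LinearMap.det_toMatrix]
  -- f is the identity
  have hfid : f = LinearMap.id := by
    apply LinearMap.ext
    rintro ⟨x, hx⟩
    apply Subtype.ext
    simp only [LinearMap.id_apply]
    rw [hfdef, LinearMap.restrict_apply]
    exact (hFmem x).1 hx
  -- g preserves the inner ℝ product
  have hg : ∀ x y : Fᗮ, (inner ℝ (g x) (g y) : ℝ) = inner ℝ x y := by
    intro x y
    rw [hgdef]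
    simp only [Submodule.coe_inner, LinearMap.restrict_apply]
    exact w.inner_map_map (x : E) (y : E)
  -- g has no nonzero fixed vector
  have hginj : Function.Injective (g - (LinearMap.id : Fᗮ →ₗ[ℝ] Fᗮ)) := by
    rw [← LinearMap.ker_eq_bot, Submodule.eq_bot_iff]
    rintro ⟨x, hx⟩ hker
    have hgx : g ⟨x, hx⟩ = ⟨x, hx⟩ := by
      have h0 : g ⟨x, hx⟩ - ⟨x, hx⟩ = 0 := by
        simpa [LinearMap.sub_apply] using hker
      exact sub_eq_zero.1 h0
    have hwx : w' x = x := congrArg Subtype.val hgx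
    have hxF : x ∈ F := (hFmem x).2 hwx
    have : x ∈ F ⊓ Fᗮ := ⟨hxF, hx⟩
    rw [Submodule.inf_orthogonal_eq_bot] at this
    apply Subtype.ext
    simpa using this
  have hdetg := aux_det_no_fixed g hg hginj
  have hrank : finrank ℝ (Fᗮ : Submodule ℝ E) = finrank ℝ E - finrank ℝ F := by
    have := Submodule.finrank_add_finrank_orthogonal F
    omega
  rw [hdetprod, hfid, LinearMap.det_id, one_mul, hdetg, hrank]
end

section
/- Let V be a real vector space, I a finite nonempty index set, s : I → V an affinely independent family of points, and σ a permutation of I. For each orbit ω of σ acting on I, let c ω = |ω|⁻¹ • ∑_{i ∈ ω} s i be the barycenter of the points indexed by ω. Then the family (c ω), indexed by the set of orbits of σ on I, is affinely independent; in particular the affine subspace it spans has dimension (number of orbits) − 1. -/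
/-- Let `s : I → V` be an affinely independent family in a real vector space and `σ` a
permutation of `I`. For each orbit `ω` of `σ` on `I`, let
`c ω = |ω|⁻¹ • ∑ i ∈ ω, s i` be the barycenter of the points indexed by `ω`. Then the
family of orbit barycenters is affinely independent; in particular the affine subspace
it spans has dimension (number of orbits) − 1. -/
theorem orbit_barycenters_affineIndependent
    {V : Type*} [AddCommGroup V] [Module ℝ V]
    {I : Type*} [Fintype I] [Nonempty I]
    (s : I → V) (hs : AffineIndependent ℝ s) (σ : Equiv.Perm I)
    (c : MulAction.orbitRel.Quotient (Subgroup.zpowers σ) I → V)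
    (hc : ∀ ω, c ω = (Nat.card ω.orbit : ℝ)⁻¹ • ∑ᶠ i ∈ ω.orbit, s i) :
    AffineIndependent ℝ c ∧
      Module.finrank ℝ (vectorSpan ℝ (Set.range c)) =
        Nat.card (MulAction.orbitRel.Quotient (Subgroup.zpowers σ) I) - 1 := by
  classical
  haveI : Fintype (MulAction.orbitRel.Quotient (Subgroup.zpowers σ) I) := Fintype.ofFinite _
  let Q := MulAction.orbitRel.Quotient (Subgroup.zpowers σ) I
  let q : I → Q := Quotient.mk''
  let F : Q → Finset I := fun ω => Finset.univ.filter fun i => q i = ω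
  have hmem : ∀ (ω : Q) (i : I), i ∈ F ω ↔ i ∈ ω.orbit := by
    intro ω i
    simp [F, q, MulAction.orbitRel.Quotient.mem_orbit]
  have horbit : ∀ ω : Q, ω.orbit = ↑(F ω) := by
    intro ω; ext i; simp [hmem]
  have hcard : ∀ ω : Q, Nat.card ω.orbit = (F ω).card := by
    intro ω; rw [horbit]; simp
  have hne : ∀ ω : Q, ((F ω).card : ℝ) ≠ 0 := by
    intro ω
    obtain ⟨i, hi⟩ := Quotient.exists_rep ω
    have : i ∈ F ω := (hmem ω i).2 (by
      rw [MulAction.orbitRel.Quotient.mem_orbit]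
      simpa [Quotient.mk''_eq_mk] using hi)
    exact_mod_cast (Finset.card_pos.2 ⟨i, this⟩).ne'
  have hc' : ∀ ω : Q, c ω = ((F ω).card : ℝ)⁻¹ • ∑ i ∈ F ω, s i := by
    intro ω
    rw [hc ω, hcard, horbit, finsum_mem_coe_finset]
  have hconst : ∀ ω : Q, ∀ i ∈ F ω, q i = ω := fun ω i hi => by
    simpa [F] using hi
  have key : ∀ w : Q → ℝ, ∑ ω, w ω = 0 → ∑ ω, w ω • c ω = 0 → ∀ ω, w ω = 0 := by
    intro w hw0 hwc ω
    set w' : I → ℝ := fun i => ((F (q i)).card : ℝ)⁻¹ * w (q i) with hw'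
    have hw'0 : ∑ i, w' i = 0 := by
      rw [← Finset.sum_fiberwise Finset.univ q w', ← hw0]
      refine Finset.sum_congr rfl fun ω _ => ?_
      have h1 : ∑ i ∈ F ω, w' i = ∑ i ∈ F ω, ((F ω).card : ℝ)⁻¹ * w ω :=
        Finset.sum_congr rfl fun i hi => by rw [hw']; simp only [hconst ω i hi]
      rw [h1, Finset.sum_const, nsmul_eq_mul, ← mul_assoc, mul_inv_cancel₀ (hne ω), one_mul]
    have hw's : ∑ i, w' i • s i = 0 := by
      rw [← Finset.sum_fiberwise Finset.univ q (fun i => w' i • s i), ← hwc]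
      refine Finset.sum_congr rfl fun ω _ => ?_
      have h1 : ∑ i ∈ F ω, w' i • s i = ∑ i ∈ F ω, (w ω * ((F ω).card : ℝ)⁻¹) • s i :=
        Finset.sum_congr rfl fun i hi => by
          rw [hw']; simp only [hconst ω i hi, mul_comm]
      rw [h1, ← Finset.smul_sum, hc' ω, mul_smul]
    have hz := affineIndependent_iff.mp hs Finset.univ w' hw'0 hw's
    obtain ⟨i, hi⟩ := Quotient.exists_rep ω
    have hqi : q i = ω := by simpa [q, Quotient.mk''_eq_mk] using hi
    have := hz i (Finset.mem_univ i)
    rw [hw'] at this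
    simp only [hqi] at this
    rcases mul_eq_zero.mp this with h | h
    · exact absurd h (inv_ne_zero (hne ω))
    · exact h
  have hindep : AffineIndependent ℝ c := by
    rw [affineIndependent_iff]
    intro t w hw0 hwc ω hω
    set w1 : Q → ℝ := fun x => if x ∈ t then w x else 0 with hw1
    have h0 : ∑ x, w1 x = 0 := by
      rw [hw1]; rw [Finset.sum_ite_mem, Finset.univ_inter, hw0]
    have hcmb : ∑ x, w1 x • c x = 0 := by
      have : ∀ x, w1 x • c x = if x ∈ t then w x • c x else 0 := by
        intro x; rw [hw1]; by_cases h : x ∈ t <;> simp [h]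
      simp_rw [this]
      rw [Finset.sum_ite_mem, Finset.univ_inter, hwc]
    have := key w1 h0 hcmb ω
    simpa [w1, hω] using this
  refine ⟨hindep, ?_⟩
  haveI : Nonempty Q := Nonempty.map q inferInstance
  have hpos : 0 < Fintype.card Q := Fintype.card_pos
  rw [Nat.card_eq_fintype_card]
  have hcq : Fintype.card Q = (Fintype.card Q - 1) + 1 := by omega
  exact hindep.finrank_vectorSpan hcq
end

section
/- Let V be a real vector space, I a finite nonempty index set, s : I → V an affinely independent family of points, σ a permutation of I, and T : V → V an affine map with T (s i) = s (σ i) for all i ∈ I. Then the set of fixed points of T lying in the open simplex on s equals the open simplex on the family of orbit barycenters (c ω)_{ω orbit of σ}; that is, {x : T x = x and x = ∑ a i • s i with all a i > 0 and ∑ a i = 1} = {∑_ω b ω • c ω : all b ω > 0 and ∑_ω b ω = 1}. -/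
private lemma perm_zpow_invariant {α β : Type*} (σ : Equiv.Perm α) (a : α → β)
    (h : ∀ i, a (σ i) = a i) : ∀ (n : ℤ) (i : α), a ((σ ^ n) i) = a i := by
  have h' : ∀ i, a (σ⁻¹ i) = a i := fun i => by
    conv_rhs => rw [← (by simp : σ (σ⁻¹ i) = i), h]
  intro n
  induction n using Int.induction_on with
  | zero => simp
  | succ k ih =>
    intro i
    rw [zpow_add_one, Equiv.Perm.mul_apply, ih, h]
  | pred k ih =>
    intro i
    rw [zpow_sub_one, Equiv.Perm.mul_apply, ih, h']

/-- Let `s : I → V` be an affinely independent family in a real vector space, `σ` a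
permutation of `I`, and `T` an affine map with `T (s i) = s (σ i)` for all `i`. Then the
set of fixed points of `T` lying in the open simplex on `s` equals the open simplex on
the family of orbit barycenters `c ω = |ω|⁻¹ • ∑ i ∈ ω, s i`. -/
theorem fixed_points_open_simplex_eq_open_simplex_orbit_barycenters
    {V : Type*} [AddCommGroup V] [Module ℝ V]
    {I : Type*} [Fintype I] [Nonempty I]
    (s : I → V) (hs : AffineIndependent ℝ s)
    (σ : Equiv.Perm I) (T : V →ᵃ[ℝ] V) (hT : ∀ i, T (s i) = s (σ i))
    (c : MulAction.orbitRel.Quotient (Subgroup.zpowers σ) I → V)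
    (hc : ∀ ω, c ω = (Nat.card ω.orbit : ℝ)⁻¹ • ∑ᶠ i ∈ ω.orbit, s i) :
    {x : V | T x = x ∧
        ∃ a : I → ℝ, (∀ i, 0 < a i) ∧ ∑ i, a i = 1 ∧ x = ∑ i, a i • s i} =
      {x : V | ∃ b : MulAction.orbitRel.Quotient (Subgroup.zpowers σ) I → ℝ,
        (∀ ω, 0 < b ω) ∧ ∑ᶠ ω, b ω = 1 ∧ x = ∑ᶠ ω, b ω • c ω} := by
  classical
  haveI : Fintype (MulAction.orbitRel.Quotient (Subgroup.zpowers σ) I) := Fintype.ofFinite _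
  -- orbits as finsets
  have hmem : ∀ (i : I) (ω : (MulAction.orbitRel.Quotient (Subgroup.zpowers σ) I)), i ∈ ω.orbit.toFinset ↔ Quotient.mk'' i = ω := by
    intro i ω
    rw [Set.mem_toFinset, MulAction.orbitRel.Quotient.mem_orbit]
  have horbfin : ∀ ω : (MulAction.orbitRel.Quotient (Subgroup.zpowers σ) I), ω.orbit.toFinset
      = Finset.univ.filter (fun i => Quotient.mk'' i = ω) := by
    intro ω; ext i; simp [hmem]
  have hfiberR : ∀ (f : I → ℝ),
      ∑ ω : (MulAction.orbitRel.Quotient (Subgroup.zpowers σ) I), ∑ i ∈ ω.orbit.toFinset, f i = ∑ i, f i := by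
    intro f
    calc ∑ ω : (MulAction.orbitRel.Quotient (Subgroup.zpowers σ) I), ∑ i ∈ ω.orbit.toFinset, f i
        = ∑ ω : (MulAction.orbitRel.Quotient (Subgroup.zpowers σ) I), ∑ i ∈ Finset.univ.filter (fun i => Quotient.mk'' i = ω), f i := by
          simp_rw [horbfin]
      _ = ∑ i, f i := Finset.sum_fiberwise _ _ _
  have hfiberV : ∀ (f : I → V),
      ∑ ω : (MulAction.orbitRel.Quotient (Subgroup.zpowers σ) I), ∑ i ∈ ω.orbit.toFinset, f i = ∑ i, f i := by
    intro f
    calc ∑ ω : (MulAction.orbitRel.Quotient (Subgroup.zpowers σ) I), ∑ i ∈ ω.orbit.toFinset, f i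
        = ∑ ω : (MulAction.orbitRel.Quotient (Subgroup.zpowers σ) I), ∑ i ∈ Finset.univ.filter (fun i => Quotient.mk'' i = ω), f i := by
          simp_rw [horbfin]
      _ = ∑ i, f i := Finset.sum_fiberwise _ _ _
  -- cardinality of orbits
  have hcard : ∀ ω : (MulAction.orbitRel.Quotient (Subgroup.zpowers σ) I), (Nat.card ω.orbit : ℝ) = (ω.orbit.toFinset.card : ℝ) := by
    intro ω
    rw [Nat.card_coe_set_eq, Set.ncard_eq_toFinset_card']
  have hcardpos : ∀ ω : (MulAction.orbitRel.Quotient (Subgroup.zpowers σ) I), 0 < ω.orbit.toFinset.card := by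
    intro ω
    rw [Finset.card_pos, Finset.Nonempty]
    obtain ⟨i, hi⟩ := MulAction.orbitRel.Quotient.nonempty_orbit ω
    exact ⟨i, Set.mem_toFinset.2 hi⟩
  -- barycenter description as finite sums
  have hc' : ∀ ω : (MulAction.orbitRel.Quotient (Subgroup.zpowers σ) I), c ω = (ω.orbit.toFinset.card : ℝ)⁻¹ • ∑ i ∈ ω.orbit.toFinset, s i := by
    intro ω
    rw [hc ω, hcard, ← Set.coe_toFinset ω.orbit, finsum_mem_coe_finset, Set.coe_toFinset]
  -- fixed point criterion
  have hfix : ∀ a : I → ℝ, ∑ i, a i = 1 →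
      (T (∑ i, a i • s i) = ∑ i, a i • s i ↔ ∀ i, a (σ i) = a i) := by
    intro a hasum
    have hsum2 : ∑ i, (a ∘ σ.symm) i = 1 := by
      simpa using (Equiv.sum_comp σ.symm a).trans hasum
    have h1 : ∑ i, a i • s i = Finset.univ.affineCombination ℝ s a :=
      (Finset.univ.affineCombination_eq_linear_combination s a hasum).symm
    have hTs : ⇑T ∘ s = s ∘ σ := by funext i; exact hT i
    have h2 : T (∑ i, a i • s i) = Finset.univ.affineCombination ℝ s (a ∘ σ.symm) := by
      rw [h1, Finset.univ.map_affineCombination s a hasum T, hTs,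
        Finset.affineCombination_eq_linear_combination _ _ _ hasum,
        Finset.affineCombination_eq_linear_combination _ _ _ hsum2,
        ← Equiv.sum_comp σ (fun j => (a ∘ σ.symm) j • s j)]
      exact Finset.sum_congr rfl fun i _ => by simp
    constructor
    · intro hfx
      have heq := (affineIndependent_iff_eq_of_fintype_affineCombination_eq ℝ s).1 hs
        (a ∘ σ.symm) a hsum2 hasum (by rw [← h2, ← h1, hfx])
      intro i
      have h3 := congrFun heq (σ i)
      simp only [Function.comp_apply, Equiv.symm_apply_apply] at h3
      exact h3.symm
    · intro hinv
      rw [h2, h1]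
      congr 1
      funext i
      show a (σ.symm i) = a i
      conv_rhs => rw [← Equiv.apply_symm_apply σ i]
      exact (hinv (σ.symm i)).symm
  -- main computation: from orbit-invariant weights to barycentric weights
  have hkey : ∀ a : I → ℝ, (∀ i, a (σ i) = a i) →
      ∑ ω : (MulAction.orbitRel.Quotient (Subgroup.zpowers σ) I), (∑ i ∈ ω.orbit.toFinset, a i) • c ω = ∑ i, a i • s i := by
    intro a hinv
    have hconst : ∀ (ω : (MulAction.orbitRel.Quotient (Subgroup.zpowers σ) I)) (i : I), i ∈ ω.orbit.toFinset →
        ∀ j ∈ ω.orbit.toFinset, a j = a i := by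
      intro ω i hi j hj
      rw [hmem] at hi hj
      have : (MulAction.orbitRel (Subgroup.zpowers σ) I) j i := Quotient.exact' (hi ▸ hj)
      obtain ⟨⟨g, n, hg⟩, hgi⟩ := this
      subst hg
      rw [← hgi]
      exact perm_zpow_invariant σ a hinv n i
    have step : ∀ ω : (MulAction.orbitRel.Quotient (Subgroup.zpowers σ) I), (∑ i ∈ ω.orbit.toFinset, a i) • c ω
        = ∑ i ∈ ω.orbit.toFinset, a i • s i := by
      intro ω
      obtain ⟨i0, hi0⟩ := MulAction.orbitRel.Quotient.nonempty_orbit ω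
      have hi0' : i0 ∈ ω.orbit.toFinset := Set.mem_toFinset.2 hi0
      have hsa : ∑ i ∈ ω.orbit.toFinset, a i = (ω.orbit.toFinset.card : ℝ) * a i0 := by
        rw [Finset.sum_congr rfl (hconst ω i0 hi0'), Finset.sum_const, nsmul_eq_mul]
      have hne : ((ω.orbit.toFinset.card : ℝ)) ≠ 0 := by
        exact_mod_cast (hcardpos ω).ne'
      have hscal : ((ω.orbit.toFinset.card : ℝ) * a i0) * ((ω.orbit.toFinset.card : ℝ))⁻¹
          = a i0 := by
        rw [mul_comm, ← mul_assoc, inv_mul_cancel₀ hne, one_mul]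
      rw [hc' ω, hsa, smul_smul, hscal, Finset.smul_sum]
      exact Finset.sum_congr rfl fun j hj => by rw [hconst ω i0 hi0' j hj]
    rw [Finset.sum_congr rfl fun ω _ => step ω]
    exact hfiberV (fun i => a i • s i)
  ext x
  simp only [Set.mem_setOf_eq]
  constructor
  · rintro ⟨hfx, a, hapos, hasum, rfl⟩
    have hinv : ∀ i, a (σ i) = a i := (hfix a hasum).1 hfx
    refine ⟨fun ω => ∑ i ∈ ω.orbit.toFinset, a i, ?_, ?_, ?_⟩
    · intro ω
      obtain ⟨i0, hi0⟩ := MulAction.orbitRel.Quotient.nonempty_orbit ω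
      exact Finset.sum_pos (fun i _ => hapos i) ⟨i0, Set.mem_toFinset.2 hi0⟩
    · rw [finsum_eq_sum_of_fintype, hfiberR a, hasum]
    · rw [finsum_eq_sum_of_fintype, hkey a hinv]
  · rintro ⟨b, hbpos, hbsum, rfl⟩
    set a : I → ℝ := fun i => b (Quotient.mk'' i) * ((MulAction.orbitRel.Quotient.orbit (Quotient.mk'' i : MulAction.orbitRel.Quotient (Subgroup.zpowers σ) I)).toFinset.card : ℝ)⁻¹
      with ha
    have hmk : ∀ i : I, i ∈ (MulAction.orbitRel.Quotient.orbit (Quotient.mk'' i : MulAction.orbitRel.Quotient (Subgroup.zpowers σ) I)).toFinset :=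
      fun i => (hmem i _).2 rfl
    have hinv : ∀ i, a (σ i) = a i := by
      intro i
      have : (Quotient.mk'' (σ i) : (MulAction.orbitRel.Quotient (Subgroup.zpowers σ) I)) = Quotient.mk'' i := by
        apply Quotient.sound'
        exact ⟨⟨σ, Subgroup.mem_zpowers σ⟩, rfl⟩
      simp only [ha, this]
    have horbsum : ∀ ω : (MulAction.orbitRel.Quotient (Subgroup.zpowers σ) I), ∑ i ∈ ω.orbit.toFinset, a i = b ω := by
      intro ω
      have : ∀ i ∈ ω.orbit.toFinset, a i = b ω * ((ω.orbit.toFinset.card : ℝ))⁻¹ := by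
        intro i hi
        have hiω : (Quotient.mk'' i : (MulAction.orbitRel.Quotient (Subgroup.zpowers σ) I)) = ω := (hmem i ω).1 hi
        simp only [ha, hiω]
      rw [Finset.sum_congr rfl this, Finset.sum_const, nsmul_eq_mul, ← mul_assoc,
        mul_comm (ω.orbit.toFinset.card : ℝ) (b ω), mul_assoc,
        mul_inv_cancel₀ (by exact_mod_cast (hcardpos ω).ne'), mul_one]
    have hapos : ∀ i, 0 < a i := by
      intro i
      exact mul_pos (hbpos _) (by
        rw [inv_pos]
        exact_mod_cast hcardpos (Quotient.mk'' i))
    have hasum : ∑ i, a i = 1 := by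
      rw [← hfiberR a, Finset.sum_congr rfl fun ω _ => horbsum ω,
        ← finsum_eq_sum_of_fintype b, hbsum]
    have hxval : ∑ᶠ ω, b ω • c ω = ∑ i, a i • s i := by
      rw [finsum_eq_sum_of_fintype, ← hkey a hinv]
      exact Finset.sum_congr rfl fun ω _ => by rw [horbsum ω]
    refine ⟨?_, a, hapos, hasum, hxval⟩
    rw [hxval]
    exact (hfix a hasum).2 hinv
end

section
/- Let V be a real vector space, I a finite nonempty index set, s : I → V an affinely independent family of points, σ a permutation of I, and T : V → V an affine map with T (s i) = s (σ i) for all i ∈ I. Then the set of fixed points of T inside the affine span of {s i : i ∈ I} equals the affine span of the family of orbit barycenters: {x ∈ affineSpan ℝ (range s) : T x = x} = affineSpan ℝ {c ω : ω orbit of σ on I}, where c ω = |ω|⁻¹ • ∑_{i ∈ ω} s i. -/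
section Aux

variable {V : Type*} [AddCommGroup V] [Module ℝ V]
    {I : Type*} [Fintype I] [Nonempty I] (σ : Equiv.Perm I)

private lemma aux_mk_sigma_apply (i : I) :
    (Quotient.mk'' (σ i) : MulAction.orbitRel.Quotient (Subgroup.zpowers σ) I)
      = Quotient.mk'' i :=
  Quotient.sound' (MulAction.mem_orbit i (⟨σ, Subgroup.mem_zpowers σ⟩ : Subgroup.zpowers σ))

private lemma aux_const_on_orbits (w : I → ℝ) (hw : ∀ i, w (σ i) = w i) {i j : I}
    (h : (Quotient.mk'' i : MulAction.orbitRel.Quotient (Subgroup.zpowers σ) I)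
        = Quotient.mk'' j) : w i = w j := by
  have key : ∀ (n : ℤ) (k : I), w ((σ ^ n) k) = w k := by
    intro n
    induction n using Int.induction_on with
    | zero => simp
    | succ m ih =>
      intro k
      have : (σ ^ ((m : ℤ) + 1)) k = (σ ^ (m : ℤ)) (σ k) := by
        rw [zpow_add_one]; rfl
      rw [this, ih, hw]
    | pred m ih =>
      intro k
      have : (σ ^ ((-m : ℤ) - 1)) k = (σ ^ (-m : ℤ)) (σ⁻¹ k) := by
        rw [zpow_sub_one]; rfl
      have h2 : w (σ⁻¹ k) = w k := by
        conv_rhs => rw [← (Equiv.apply_symm_apply σ k : σ (σ⁻¹ k) = k), hw]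
        rfl
      rw [this, ih, h2]
  have h' : i ∈ MulAction.orbit (Subgroup.zpowers σ) j := Quotient.eq''.mp h
  obtain ⟨⟨g, hg⟩, hgi⟩ := h'
  obtain ⟨n, rfl⟩ := Subgroup.mem_zpowers_iff.mp hg
  rw [← hgi]
  exact key n j

end Aux

/-- Let `s : I → V` be an affinely independent family in a real vector space, `σ` a
permutation of `I`, and `T` an affine map with `T (s i) = s (σ i)` for all `i`. Then the
set of fixed points of `T` inside the affine span of the `s i` equals the affine span of
the family of orbit barycenters `c ω = |ω|⁻¹ • ∑ i ∈ ω, s i`. -/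
theorem fixed_points_in_affineSpan_eq_affineSpan_orbit_barycenters
    {V : Type*} [AddCommGroup V] [Module ℝ V]
    {I : Type*} [Fintype I] [Nonempty I]
    (s : I → V) (hs : AffineIndependent ℝ s)
    (σ : Equiv.Perm I) (T : V →ᵃ[ℝ] V) (hT : ∀ i, T (s i) = s (σ i))
    (c : MulAction.orbitRel.Quotient (Subgroup.zpowers σ) I → V)
    (hc : ∀ ω, c ω = (Nat.card ω.orbit : ℝ)⁻¹ • ∑ᶠ i ∈ ω.orbit, s i) :
    {x : V | x ∈ affineSpan ℝ (Set.range s) ∧ T x = x} =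
      (affineSpan ℝ (Set.range c) : Set V) := by
  classical
  letI : Fintype (MulAction.orbitRel.Quotient (Subgroup.zpowers σ) I) := Fintype.ofFinite _
  set F : MulAction.orbitRel.Quotient (Subgroup.zpowers σ) I → Finset I :=
    fun ω => (Set.toFinite ω.orbit).toFinset with hF
  have hmemF : ∀ ω (i : I), i ∈ F ω ↔ Quotient.mk'' i = ω := by
    intro ω i
    rw [hF, Set.Finite.mem_toFinset]
    exact MulAction.orbitRel.Quotient.mem_orbit
  have hFne : ∀ ω, (F ω).Nonempty := by
    intro ω
    obtain ⟨i, hi⟩ := MulAction.orbitRel.Quotient.nonempty_orbit ω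
    exact ⟨i, (Set.Finite.mem_toFinset _).mpr hi⟩
  have hcard : ∀ ω, ((F ω).card : ℝ) ≠ 0 := by
    intro ω
    exact_mod_cast Finset.card_ne_zero_of_mem (hFne ω).choose_spec
  -- rewrite `c` in finset terms
  have hc' : ∀ ω, c ω = ((F ω).card : ℝ)⁻¹ • ∑ i ∈ F ω, s i := by
    intro ω
    have hn : Nat.card ω.orbit = (F ω).card := by
      rw [Nat.card_coe_set_eq, Set.ncard_eq_toFinset_card ω.orbit (Set.toFinite _)]
    rw [hc ω, hn]
    congr 1
    rw [← Set.Finite.coe_toFinset (Set.toFinite ω.orbit), finsum_mem_coe_finset]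
  -- σ maps each orbit finset to itself
  have hmap : ∀ ω, (F ω).map σ.toEmbedding = F ω := by
    intro ω
    ext j
    simp only [Finset.mem_map, Equiv.coe_toEmbedding]
    constructor
    · rintro ⟨i, hi, rfl⟩
      rw [hmemF] at hi ⊢
      rw [← hi]
      exact aux_mk_sigma_apply σ i
    · intro hj
      refine ⟨σ⁻¹ j, ?_, (Equiv.apply_symm_apply σ j : σ (σ⁻¹ j) = j)⟩
      rw [hmemF] at hj ⊢
      rw [← hj]
      conv_rhs => rw [← (Equiv.apply_symm_apply σ j : σ (σ⁻¹ j) = j)]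
      exact (aux_mk_sigma_apply σ (σ⁻¹ j)).symm
  -- fiberwise sums over orbits
  have hfibV : ∀ (f : I → V), ∑ ω, ∑ i ∈ F ω, f i = ∑ i, f i := by
    intro f
    rw [← Finset.sum_fiberwise Finset.univ (fun i => (Quotient.mk'' i : MulAction.orbitRel.Quotient (Subgroup.zpowers σ) I)) f]
    refine Finset.sum_congr rfl fun ω _ => Finset.sum_congr ?_ fun _ _ => rfl
    ext i
    simp [hmemF]
  have hfibR : ∀ (f : I → ℝ), ∑ ω, ∑ i ∈ F ω, f i = ∑ i, f i := by
    intro f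
    rw [← Finset.sum_fiberwise Finset.univ (fun i => (Quotient.mk'' i : MulAction.orbitRel.Quotient (Subgroup.zpowers σ) I)) f]
    refine Finset.sum_congr rfl fun ω _ => Finset.sum_congr ?_ fun _ _ => rfl
    ext i
    simp [hmemF]
  -- each barycenter is an affine combination of the `s i`
  have hbary : ∀ ω,
      c ω = (F ω).affineCombination ℝ s (fun _ => ((F ω).card : ℝ)⁻¹) := by
    intro ω
    have hw1 : ∑ _i ∈ F ω, ((F ω).card : ℝ)⁻¹ = 1 := by
      rw [Finset.sum_const, nsmul_eq_mul, mul_inv_cancel₀ (hcard ω)]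
    rw [Finset.affineCombination_eq_linear_combination _ _ _ hw1, hc' ω, Finset.smul_sum]
  have hw1const : ∀ ω, ∑ _i ∈ F ω, ((F ω).card : ℝ)⁻¹ = 1 := by
    intro ω
    rw [Finset.sum_const, nsmul_eq_mul, mul_inv_cancel₀ (hcard ω)]
  -- T fixes each barycenter
  have hTc : ∀ ω, T (c ω) = c ω := by
    intro ω
    have hmapped : ∀ r : ℝ, (F ω).affineCombination ℝ (s ∘ σ) (fun _ => r) =
        (F ω).affineCombination ℝ s (fun _ => r) := by
      intro r
      conv_rhs => rw [← hmap ω, Finset.affineCombination_map]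
      rfl
    rw [hbary ω, Finset.map_affineCombination _ _ _ (hw1const ω),
      show ⇑T ∘ s = s ∘ ⇑σ from funext hT, hmapped, ← hbary ω]
  -- barycenters lie in span of the `s i`
  have hcmem : ∀ ω, c ω ∈ affineSpan ℝ (Set.range s) := by
    intro ω
    rw [hbary ω]
    exact affineCombination_mem_affineSpan (hw1const ω) s
  ext x
  simp only [Set.mem_setOf_eq, SetLike.mem_coe]
  constructor
  · rintro ⟨hxmem, hxfix⟩
    obtain ⟨w, hw, hxw⟩ := eq_affineCombination_of_mem_affineSpan_of_fintype hxmem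
    -- T x is the affine combination with weights w ∘ σ⁻¹
    have hsum' : ∑ i, (w ∘ ⇑σ⁻¹) i = 1 := by
      rw [← hw]; exact Fintype.sum_equiv σ⁻¹ _ _ fun i => rfl
    have hTx : Finset.univ.affineCombination ℝ s (w ∘ ⇑σ⁻¹) =
        Finset.univ.affineCombination ℝ s w := by
      have h1 : T x = Finset.univ.affineCombination ℝ (s ∘ σ) w := by
        rw [hxw, Finset.map_affineCombination _ _ _ hw,
          show ⇑T ∘ s = s ∘ ⇑σ from funext hT]
      have h2 : Finset.univ.affineCombination ℝ s (w ∘ ⇑σ⁻¹) =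
          Finset.univ.affineCombination ℝ (s ∘ σ) w := by
        conv_lhs => rw [← Finset.map_univ_equiv σ, Finset.affineCombination_map]
        congr 1
        funext i
        simp
      rw [h2, ← h1, hxfix, hxw]
    have hweq : w ∘ ⇑σ⁻¹ = w :=
      (affineIndependent_iff_eq_of_fintype_affineCombination_eq ℝ s).mp hs _ _ hsum' hw hTx
    have hwσ : ∀ i, w (σ i) = w i := by
      intro i
      have := congrFun hweq (σ i)
      simpa using this.symm
    have hwconst : ∀ ω, ∀ i ∈ F ω, ∀ j ∈ F ω, w i = w j := by
      intro ω i hi j hj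
      rw [hmemF] at hi hj
      exact aux_const_on_orbits σ w hwσ (hi.trans hj.symm)
    set u : _ → ℝ := fun ω => ∑ i ∈ F ω, w i with hu
    have husum : ∑ ω, u ω = 1 := by
      simp only [hu]
      rw [hfibR w]
      exact hw
    have hxu : x = Finset.univ.affineCombination ℝ c u := by
      rw [Finset.affineCombination_eq_linear_combination _ _ _ husum, hxw,
        Finset.affineCombination_eq_linear_combination _ _ _ hw, ← hfibV (fun i => w i • s i)]
      refine Finset.sum_congr rfl fun ω _ => ?_
      obtain ⟨j, hj⟩ := hFne ω
      have hwj : ∀ i ∈ F ω, w i = w j := fun i hi => hwconst ω i hi j hj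
      have h3 : ∑ i ∈ F ω, w i • s i = w j • ∑ i ∈ F ω, s i := by
        rw [Finset.smul_sum]
        exact Finset.sum_congr rfl fun i hi => by rw [hwj i hi]
      have h4 : u ω = ((F ω).card : ℝ) * w j := by
        simp only [hu]
        rw [Finset.sum_congr rfl hwj, Finset.sum_const, nsmul_eq_mul]
      rw [h3, h4, hc' ω, smul_smul, mul_comm ((F ω).card : ℝ) (w j), mul_assoc,
        mul_inv_cancel₀ (hcard ω), mul_one]
    rw [hxu]
    exact affineCombination_mem_affineSpan husum c
  · intro hxmem
    obtain ⟨u, hu, hxu⟩ := eq_affineCombination_of_mem_affineSpan_of_fintype hxmem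
    constructor
    · have : affineSpan ℝ (Set.range c) ≤ affineSpan ℝ (Set.range s) := by
        rw [affineSpan_le]
        rintro _ ⟨ω, rfl⟩
        exact hcmem ω
      exact this hxmem
    · rw [hxu, Finset.map_affineCombination _ _ _ hu,
        show ⇑T ∘ c = c from funext hTc]
end
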